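/- Fix a weight matrix P ∈ ℝ_{>0}^{m×n} and let X be a feasible assignment attaining the optimal makespan, i.e., max_{i∈[m]} ℓ_i(P,X) = ℓ^MKS(P). Then there exists a ratio vector u ∈ ℝ_{>0}^m such that for all i ∈ [m] and j ∈ [n]: if x_{i,j} > 0, then p_{i,j}/u_i ≤ p_{k,j}/u_k for every k ∈ [m] (equivalently, if some k satisfies p_{k,j}/u_k < p_{i,j}/u_i, then x_{i,j} = 0). -/

import Mathlib

open Finset

/-- A feasible (fractional) assignment: entries in `[0,1]`, each item fully allocated. -/
def Feasible {m n : ℕ} (X : Fin m → Fin n → ℝ) : Prop :=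
  (∀ i j, 0 ≤ X i j ∧ X i j ≤ 1) ∧ ∀ j, ∑ i, X i j = 1

/-- Load of agent `i` under the assignment `X`. -/
noncomputable def loadX {m n : ℕ} (P X : Fin m → Fin n → ℝ) (i : Fin m) : ℝ :=
  ∑ j, X i j * P i j

/-- Optimal makespan (MinMax objective). -/
noncomputable def MKS {m n : ℕ} (P : Fin m → Fin n → ℝ) : ℝ :=
  sInf { t | ∃ X, Feasible X ∧ t = ⨆ i, loadX P X i }

/-- Optimal Santa Claus value (MaxMin objective). -/
noncomputable def SNT {m n : ℕ} (P : Fin m → Fin n → ℝ) : ℝ :=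
  sSup { t | ∃ X, Feasible X ∧ t = ⨅ i, loadX P X i }

namespace Stmt16aux

variable {m n : ℕ}

lemma load_nonneg (P X : Fin m → Fin n → ℝ) (hP : ∀ i j, 0 < P i j)
    (hX : Feasible X) (i : Fin m) : 0 ≤ loadX P X i :=
  Finset.sum_nonneg fun j _ => mul_nonneg (hX.1 i j).1 (hP i j).le

lemma load_le_sup (hm : 0 < m) (P X : Fin m → Fin n → ℝ) (i : Fin m) :
    loadX P X i ≤ ⨆ k, loadX P X k := by
  haveI : Nonempty (Fin m) := ⟨⟨0, hm⟩⟩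
  exact le_ciSup (Set.Finite.bddAbove (Set.finite_range _)) i

lemma sup_load_nonneg (hm : 0 < m) (P X : Fin m → Fin n → ℝ) (hP : ∀ i j, 0 < P i j)
    (hX : Feasible X) : 0 ≤ ⨆ i, loadX P X i :=
  le_trans (load_nonneg P X hP hX ⟨0, hm⟩) (load_le_sup hm P X _)

lemma mks_bddBelow (hm : 0 < m) (P : Fin m → Fin n → ℝ) (hP : ∀ i j, 0 < P i j) :
    BddBelow { t | ∃ X, Feasible X ∧ t = ⨆ i, loadX P X i } := by
  refine ⟨0, fun t ht => ?_⟩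
  obtain ⟨Y, hY, rfl⟩ := ht
  exact sup_load_nonneg hm P Y hP hY

lemma mks_le (hm : 0 < m) (P : Fin m → Fin n → ℝ) (hP : ∀ i j, 0 < P i j)
    (Y : Fin m → Fin n → ℝ) (hY : Feasible Y) :
    MKS P ≤ ⨆ i, loadX P Y i :=
  csInf_le (mks_bddBelow hm P hP) ⟨Y, hY, rfl⟩

lemma exists_pos_entry (hn : 0 < n) (X : Fin m → Fin n → ℝ) (hX : Feasible X) :
    ∃ i j, 0 < X i j := by
  by_contra h
  push_neg at h
  have h1 := hX.2 ⟨0, hn⟩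
  have : (∑ i, X i ⟨0, hn⟩) ≤ 0 := Finset.sum_nonpos fun i _ => h i ⟨0, hn⟩
  linarith

lemma mks_pos (hm : 0 < m) (hn : 0 < n) (P : Fin m → Fin n → ℝ) (hP : ∀ i j, 0 < P i j)
    (X : Fin m → Fin n → ℝ) (hX : Feasible X)
    (hopt : (⨆ i, loadX P X i) = MKS P) : 0 < MKS P := by
  obtain ⟨i, j, hij⟩ := exists_pos_entry hn X hX
  have h1 : 0 < loadX P X i := by
    have : X i j * P i j ≤ loadX P X i := by
      apply Finset.single_le_sum (f := fun j => X i j * P i j)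
        (fun j _ => mul_nonneg (hX.1 i j).1 (hP i j).le) (Finset.mem_univ j)
    nlinarith [hP i j]
  calc 0 < loadX P X i := h1
    _ ≤ ⨆ k, loadX P X k := load_le_sup hm P X i
    _ = MKS P := hopt


/-- Step A: at an optimal solution every load equals the makespan. -/
lemma stepA (hm : 0 < m) (P : Fin m → Fin n → ℝ) (hP : ∀ i j, 0 < P i j)
    (hpos : 0 < MKS P)
    (Y : Fin m → Fin n → ℝ) (hY : Feasible Y)
    (hYopt : (⨆ i, loadX P Y i) = MKS P) (i0 : Fin m) :
    loadX P Y i0 = MKS P := by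
  haveI : Nonempty (Fin m) := ⟨⟨0, hm⟩⟩
  set t := MKS P with ht
  by_contra hne
  have hlt : loadX P Y i0 < t :=
    lt_of_le_of_ne (hYopt ▸ load_le_sup hm P Y i0) hne
  set C : ℝ := ∑ j, P i0 j with hC
  have hC0 : 0 ≤ C := Finset.sum_nonneg fun j _ => (hP i0 j).le
  obtain ⟨ε, hε0, hε1, hεC⟩ : ∃ ε : ℝ, 0 < ε ∧ ε < 1 ∧ ε * C < t - loadX P Y i0 := by
    have hd : 0 < t - loadX P Y i0 := by linarith
    refine ⟨min (1/2) ((t - loadX P Y i0) / (C + 1)), ?_, ?_, ?_⟩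
    · have : 0 < (t - loadX P Y i0) / (C + 1) := by positivity
      exact lt_min (by norm_num) this
    · calc min (1/2) ((t - loadX P Y i0) / (C + 1)) ≤ 1/2 := min_le_left _ _
        _ < 1 := by norm_num
    · have h1 : min (1/2) ((t - loadX P Y i0) / (C + 1)) ≤ (t - loadX P Y i0) / (C + 1) :=
        min_le_right _ _
      have h2 : (t - loadX P Y i0) / (C + 1) * C < t - loadX P Y i0 := by
        rw [div_mul_eq_mul_div, div_lt_iff₀ (by linarith)]
        nlinarith
      exact lt_of_le_of_lt (mul_le_mul_of_nonneg_right h1 hC0) h2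
  set Z : Fin m → Fin n → ℝ := fun i j => (1 - ε) * Y i j + (if i = i0 then ε else 0) with hZ
  have hZfeas : Feasible Z := by
    constructor
    · intro i j
      have h0 := (hY.1 i j).1
      have h1' := (hY.1 i j).2
      by_cases h : i = i0
      · simp only [hZ, if_pos h]
        constructor <;> nlinarith
      · simp only [hZ, if_neg h, add_zero]
        constructor <;> nlinarith
    · intro j
      have hs := hY.2 j
      simp only [hZ]
      rw [Finset.sum_add_distrib, ← Finset.mul_sum, hs, Finset.sum_ite_eq' Finset.univ i0]
      simp
  have hloadZ : ∀ i, loadX P Z i = (1 - ε) * loadX P Y i + (if i = i0 then ε * C else 0) := by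
    intro i
    by_cases h : i = i0
    · subst h
      simp only [loadX, hZ, hC, eq_self_iff_true, if_true]
      rw [Finset.mul_sum, Finset.mul_sum, ← Finset.sum_add_distrib]
      apply Finset.sum_congr rfl
      intro j _
      ring
    · simp only [loadX, hZ, if_neg h, add_zero, Finset.mul_sum]
      apply Finset.sum_congr rfl
      intro j _
      ring
  have hsup : (⨆ i, loadX P Z i) < t := by
    have hb : ∀ i, loadX P Z i ≤ max ((1 - ε) * t) (loadX P Y i0 + ε * C) := by
      intro i
      rw [hloadZ i]
      by_cases h : i = i0
      · rw [if_pos h, h]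
        refine le_trans ?_ (le_max_right _ _)
        have h2 : loadX P Y i0 ≤ t := hYopt ▸ load_le_sup hm P Y i0
        have h4 : 0 ≤ loadX P Y i0 := Finset.sum_nonneg fun j _ => mul_nonneg (hY.1 i0 j).1 (hP i0 j).le
        nlinarith
      · rw [if_neg h, add_zero]
        refine le_trans ?_ (le_max_left _ _)
        have h1 : loadX P Y i ≤ t := hYopt ▸ load_le_sup hm P Y i
        nlinarith
    have hmax : max ((1 - ε) * t) (loadX P Y i0 + ε * C) < t := by
      apply max_lt
      · nlinarith
      · linarith
    exact lt_of_le_of_lt (ciSup_le hb) hmax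
  have := mks_le hm P hP Z hZfeas
  rw [← ht] at this
  linarith

/-- auxiliary transfer-scale sequence -/
noncomputable def Dseq (P : Fin m → Fin n → ℝ) (c : ℕ → Fin m) (e : ℕ → Fin n) (θ : ℝ) :
    ℕ → ℝ
  | 0 => 1
  | (t+1) => Dseq P c e θ t * (P (c (t+1)) (e t) / P (c (t+1)) (e (t+1))) * θ

lemma Dseq_pos (P : Fin m → Fin n → ℝ) (hP : ∀ i j, 0 < P i j) (c : ℕ → Fin m)
    (e : ℕ → Fin n) (θ : ℝ) (hθ : 0 < θ) : ∀ t, 0 < Dseq P c e θ t := by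
  intro t
  induction t with
  | zero => norm_num [Dseq]
  | succ t ih =>
    have h1 := hP (c (t+1)) (e t)
    have h2 := hP (c (t+1)) (e (t+1))
    rw [Dseq]
    positivity

lemma Dseq_rel (P : Fin m → Fin n → ℝ) (hP : ∀ i j, 0 < P i j) (c : ℕ → Fin m)
    (e : ℕ → Fin n) (θ : ℝ) (t : ℕ) :
    Dseq P c e θ (t+1) * P (c (t+1)) (e (t+1)) = θ * (Dseq P c e θ t * P (c (t+1)) (e t)) := by
  have h2 := (hP (c (t+1)) (e (t+1))).ne'
  rw [Dseq]
  field_simp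

lemma Dseq_form (P : Fin m → Fin n → ℝ) (hP : ∀ i j, 0 < P i j) (c : ℕ → Fin m)
    (e : ℕ → Fin n) (θ : ℝ) (t : ℕ) :
    Dseq P c e θ t * P (c t) (e t) =
      θ^t * (∏ s ∈ Finset.range t, (P (c (s+1)) (e s) / P (c s) (e s))) * P (c 0) (e 0) := by
  induction t with
  | zero => simp [Dseq]
  | succ t ih =>
    have h1 := (hP (c t) (e t)).ne'
    rw [Dseq_rel P hP c e θ t, Finset.prod_range_succ, pow_succ]
    have : Dseq P c e θ t * P (c (t+1)) (e t)
        = (Dseq P c e θ t * P (c t) (e t)) * (P (c (t+1)) (e t) / P (c t) (e t)) := by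
      field_simp
    rw [this, ih]
    ring

/-- Step H : closed walks have product ≥ 1 at an optimal solution. -/
lemma stepH (hm : 0 < m) (hn : 0 < n) (P : Fin m → Fin n → ℝ) (hP : ∀ i j, 0 < P i j)
    (hpos : 0 < MKS P)
    (X : Fin m → Fin n → ℝ) (hX : Feasible X) (hopt : (⨆ i, loadX P X i) = MKS P)
    (L : ℕ) (c : ℕ → Fin m) (e : ℕ → Fin n) (hc : c L = c 0)
    (he : ∀ t < L, 0 < X (c (t+1)) (e t)) :
    1 ≤ ∏ t ∈ Finset.range L, (P (c t) (e t) / P (c (t+1)) (e t)) := by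
  haveI : Nonempty (Fin m) := ⟨⟨0, hm⟩⟩
  by_contra hQlt
  push_neg at hQlt
  set Q : ℝ := ∏ t ∈ Finset.range L, (P (c t) (e t) / P (c (t+1)) (e t)) with hQ
  have hQ0 : 0 < Q := Finset.prod_pos fun t _ => div_pos (hP _ _) (hP _ _)
  -- L ≥ 1
  obtain ⟨M, rfl⟩ : ∃ M, L = M + 1 := by
    cases L with
    | zero =>
      rw [Finset.range_zero, Finset.prod_empty] at hQ
      exact absurd (hQ ▸ hQlt) (lt_irrefl 1)
    | succ M => exact ⟨M, rfl⟩
  -- choose θ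
  obtain ⟨θ, hθ0, hθ1, hθM⟩ : ∃ θ : ℝ, 0 < θ ∧ θ < 1 ∧ Q < θ ^ M := by
    refine ⟨Q ^ ((1:ℝ)/(M+1)), Real.rpow_pos_of_pos hQ0 _, ?_, ?_⟩
    · have := Real.rpow_lt_rpow_of_exponent_gt hQ0 hQlt (by positivity : (0:ℝ) < 1/(M+1))
      simpa using this
    · have hlt : (M:ℝ)/(M+1) < 1 := by
        rw [div_lt_one (by positivity)]
        linarith
      have h2 : Q ^ (1:ℝ) < Q ^ ((M:ℝ)/(M+1)) :=
        Real.rpow_lt_rpow_of_exponent_gt hQ0 hQlt hlt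
      calc Q = Q ^ (1:ℝ) := (Real.rpow_one Q).symm
        _ < Q ^ ((M:ℝ)/(M+1)) := h2
        _ = (Q ^ ((1:ℝ)/(M+1))) ^ M := by
            rw [← Real.rpow_natCast (Q ^ ((1:ℝ)/(M+1))) M, ← Real.rpow_mul hQ0.le]
            congr 1
            ring
  set D := Dseq P c e θ with hD
  have hDpos := Dseq_pos P hP c e θ hθ0
  -- wrap inequality
  have hwrap : D 0 * P (c 0) (e 0) < D M * P (c 0) (e M) := by
    have h1 : D M * P (c 0) (e M)
        = (D M * P (c M) (e M)) * (P (c (M+1)) (e M) / P (c M) (e M)) := by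
      rw [hc]
      have := (hP (c M) (e M)).ne'
      field_simp
    rw [h1, Dseq_form P hP c e θ M]
    have hform : θ^M * (∏ s ∈ Finset.range M, (P (c (s+1)) (e s) / P (c s) (e s))) * P (c 0) (e 0)
        * (P (c (M+1)) (e M) / P (c M) (e M))
        = θ^M * (∏ s ∈ Finset.range (M+1), (P (c (s+1)) (e s) / P (c s) (e s))) * P (c 0) (e 0) := by
      rw [Finset.prod_range_succ]
      ring
    rw [hform]
    have hRQ : (∏ s ∈ Finset.range (M+1), (P (c (s+1)) (e s) / P (c s) (e s))) = Q⁻¹ := by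
      rw [hQ, ← Finset.prod_inv_distrib]
      apply Finset.prod_congr rfl
      intro s _
      rw [inv_div]
    rw [hRQ]
    have hD0 : D 0 = 1 := rfl
    rw [hD0]
    have h3 : 1 < θ^M * Q⁻¹ := by
      rw [← div_eq_mul_inv, lt_div_iff₀ hQ0]
      linarith
    nlinarith [hP (c 0) (e 0)]

  -- scale choice
  have hne : (Finset.range (M+1)).Nonempty := Finset.nonempty_range_add_one
  set μ : ℝ := (Finset.range (M+1)).inf' hne (fun t => X (c (t+1)) (e t)) with hμ
  have hμpos : 0 < μ := by
    rw [hμ, Finset.lt_inf'_iff]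
    intro t ht
    exact he t (Finset.mem_range.mp ht)
  set S : ℝ := ∑ t ∈ Finset.range (M+1), D t with hS
  have hSpos : 0 < S := Finset.sum_pos (fun t _ => hDpos t) hne
  set ε : ℝ := μ / (2 * S) with hε
  have hεpos : 0 < ε := by positivity
  have hsum : ∑ t ∈ Finset.range (M+1), ε * D t = μ / 2 := by
    rw [← Finset.mul_sum, ← hS, hε]
    field_simp
  -- the improved assignment
  set Z : Fin m → Fin n → ℝ := fun i j => X i j +
    ∑ t ∈ Finset.range (M+1), ε * D t *
      (((if i = c t then (1:ℝ) else 0) - (if i = c (t+1) then 1 else 0)) *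
        (if j = e t then 1 else 0)) with hZdef
  -- nonnegativity
  have hZnn : ∀ i j, 0 ≤ Z i j := by
    intro i j
    by_cases hcase : ∃ t, t ∈ Finset.range (M+1) ∧ i = c (t+1) ∧ j = e t
    · obtain ⟨t0, ht0, hi, hj⟩ := hcase
      have hXij : μ ≤ X i j := by
        rw [hi, hj]
        exact Finset.inf'_le _ ht0
      have hterm : ∀ t ∈ Finset.range (M+1), -(ε * D t) ≤ ε * D t *
          (((if i = c t then (1:ℝ) else 0) - (if i = c (t+1) then 1 else 0)) *
            (if j = e t then 1 else 0)) := by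
        intro t ht
        have h1 : (-1:ℝ) ≤ ((if i = c t then (1:ℝ) else 0) - (if i = c (t+1) then 1 else 0)) *
            (if j = e t then 1 else 0) := by
          split_ifs <;> norm_num
        have h2 : 0 < ε * D t := mul_pos hεpos (hDpos t)
        nlinarith
      have hsle := Finset.sum_le_sum hterm
      have hneg : ∑ t ∈ Finset.range (M+1), -(ε * D t) = -(μ/2) := by
        rw [Finset.sum_neg_distrib, hsum]
      rw [hneg] at hsle
      simp only [hZdef]
      linarith
    · push_neg at hcase
      have hterm : ∀ t ∈ Finset.range (M+1), 0 ≤ ε * D t *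
          (((if i = c t then (1:ℝ) else 0) - (if i = c (t+1) then 1 else 0)) *
            (if j = e t then 1 else 0)) := by
        intro t ht
        have h3 := hcase t ht
        have h2 : 0 < ε * D t := mul_pos hεpos (hDpos t)
        by_cases hi : i = c (t+1)
        · have hj : j ≠ e t := h3 hi
          rw [if_neg hj, mul_zero, mul_zero]
        · rw [if_neg hi, sub_zero]
          split_ifs <;> nlinarith
      have := Finset.sum_nonneg hterm
      have hX0 := (hX.1 i j).1
      simp only [hZdef]
      linarith
  -- column sums
  have hZcol : ∀ j, ∑ i, Z i j = 1 := by
    intro j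
    simp only [hZdef]
    rw [Finset.sum_add_distrib, hX.2 j]
    have hzero : ∑ i, ∑ t ∈ Finset.range (M+1), ε * D t *
        (((if i = c t then (1:ℝ) else 0) - (if i = c (t+1) then 1 else 0)) *
          (if j = e t then 1 else 0)) = 0 := by
      rw [Finset.sum_comm]
      apply Finset.sum_eq_zero
      intro t _
      have hre : ∀ i : Fin m, ε * D t *
          (((if i = c t then (1:ℝ) else 0) - (if i = c (t+1) then 1 else 0)) *
            (if j = e t then 1 else 0))
          = (ε * D t * (if j = e t then 1 else 0)) *
            ((if i = c t then (1:ℝ) else 0) - (if i = c (t+1) then 1 else 0)) := fun i => by ring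
      rw [Finset.sum_congr rfl (fun i _ => hre i), ← Finset.mul_sum]
      have h0 : ∑ i : Fin m, (((if i = c t then (1:ℝ) else 0) - (if i = c (t+1) then 1 else 0))) = 0 := by
        rw [Finset.sum_sub_distrib]
        simp [Finset.sum_ite_eq']
      rw [h0, mul_zero]
    rw [hzero, add_zero]
  -- entries at most one
  have hZle1 : ∀ i j, Z i j ≤ 1 := by
    intro i j
    have h1 : Z i j + ∑ i' ∈ Finset.univ.erase i, Z i' j = 1 := by
      rw [← hZcol j]
      exact Finset.add_sum_erase Finset.univ (fun i' => Z i' j) (Finset.mem_univ i)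
    have h2 : 0 ≤ ∑ i' ∈ Finset.univ.erase i, Z i' j :=
      Finset.sum_nonneg fun i' _ => hZnn i' j
    linarith
  have hZfeas : Feasible Z := ⟨fun i j => ⟨hZnn i j, hZle1 i j⟩, hZcol⟩
  -- load identity
  have hload : ∀ a, loadX P Z a = loadX P X a +
      ∑ t ∈ Finset.range (M+1), ((if a = c t then ε * D t * P (c t) (e t) else 0)
        - (if a = c (t+1) then ε * D t * P (c (t+1)) (e t) else 0)) := by
    intro a
    simp only [loadX, hZdef]
    rw [Finset.sum_congr rfl (fun j _ => add_mul (X a j) _ (P a j)), Finset.sum_add_distrib]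
    congr 1
    rw [Finset.sum_congr rfl (fun j (_ : j ∈ Finset.univ) => Finset.sum_mul _ _ (P a j)),
      Finset.sum_comm]
    apply Finset.sum_congr rfl
    intro t _
    have hre : ∀ j : Fin n, (ε * D t *
        (((if a = c t then (1:ℝ) else 0) - (if a = c (t+1) then 1 else 0)) *
          (if j = e t then 1 else 0))) * P a j
        = (if j = e t then (ε * D t *
            ((if a = c t then (1:ℝ) else 0) - (if a = c (t+1) then 1 else 0))) * P a j else 0) := by
      intro j
      split_ifs <;> ring
    rw [Finset.sum_congr rfl (fun j _ => hre j), Finset.sum_ite_eq' Finset.univ (e t)]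
    simp only [Finset.mem_univ, if_true]
    by_cases h1 : a = c t
    · by_cases h2 : a = c (t+1)
      · rw [if_pos h1, if_pos h1, if_pos h2, if_pos h2, ← h1, ← h2]
        ring
      · rw [if_pos h1, if_pos h1, if_neg h2, if_neg h2, ← h1]
        ring
    · by_cases h2 : a = c (t+1)
      · rw [if_neg h1, if_neg h1, if_pos h2, if_pos h2, ← h2]
        ring
      · rw [if_neg h1, if_neg h1, if_neg h2, if_neg h2]
        ring
  -- the load change is nonpositive, strictly negative at c 0
  have hpair : ∀ a, ∀ t ∈ Finset.range M,
      (if a = c (t+1) then ε * D (t+1) * P (c (t+1)) (e (t+1)) else 0)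
        ≤ (if a = c (t+1) then ε * D t * P (c (t+1)) (e t) else 0) := by
    intro a t _
    by_cases h : a = c (t+1)
    · rw [if_pos h, if_pos h]
      have hrel := Dseq_rel P hP c e θ t
      have h2 : 0 < Dseq P c e θ t * P (c (t+1)) (e t) := mul_pos (hDpos t) (hP _ _)
      have : Dseq P c e θ (t+1) * P (c (t+1)) (e (t+1)) ≤ Dseq P c e θ t * P (c (t+1)) (e t) := by
        rw [hrel]
        nlinarith
      calc ε * D (t+1) * P (c (t+1)) (e (t+1)) = ε * (Dseq P c e θ (t+1) * P (c (t+1)) (e (t+1))) := by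
            rw [hD]; ring
        _ ≤ ε * (Dseq P c e θ t * P (c (t+1)) (e t)) := by nlinarith
        _ = ε * D t * P (c (t+1)) (e t) := by rw [hD]; ring
    · rw [if_neg h, if_neg h]
  have hwrap2 : ∀ a, (if a = c 0 then ε * D 0 * P (c 0) (e 0) else 0)
      ≤ (if a = c (M+1) then ε * D M * P (c (M+1)) (e M) else 0) ∧
      (c 0 = c 0 → (if (c 0 : Fin m) = c 0 then ε * D 0 * P (c 0) (e 0) else 0)
        < (if (c 0 : Fin m) = c (M+1) then ε * D M * P (c (M+1)) (e M) else 0)) := by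
    intro a
    have hcc : c (M+1) = c 0 := hc
    have hlt : ε * D 0 * P (c 0) (e 0) < ε * D M * P (c (M+1)) (e M) := by
      rw [hcc]
      calc ε * D 0 * P (c 0) (e 0) = ε * (D 0 * P (c 0) (e 0)) := by ring
        _ < ε * (D M * P (c 0) (e M)) := by exact mul_lt_mul_of_pos_left hwrap hεpos
        _ = ε * D M * P (c 0) (e M) := by ring
    constructor
    · by_cases h : a = c 0
      · rw [if_pos h, if_pos (hcc ▸ h : a = c (M+1))]
        exact hlt.le
      · rw [if_neg h, if_neg (fun hh => h (hh.trans hcc))]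
    · intro _
      rw [if_pos rfl, if_pos hcc.symm]
      exact hlt
  have hΔsplit : ∀ a, ∑ t ∈ Finset.range (M+1), ((if a = c t then ε * D t * P (c t) (e t) else 0)
        - (if a = c (t+1) then ε * D t * P (c (t+1)) (e t) else 0))
      = ((if a = c 0 then ε * D 0 * P (c 0) (e 0) else 0)
          - (if a = c (M+1) then ε * D M * P (c (M+1)) (e M) else 0))
        + ∑ t ∈ Finset.range M, ((if a = c (t+1) then ε * D (t+1) * P (c (t+1)) (e (t+1)) else 0)
            - (if a = c (t+1) then ε * D t * P (c (t+1)) (e t) else 0)) := by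
    intro a
    rw [Finset.sum_sub_distrib,
      Finset.sum_range_succ' (fun t => if a = c t then ε * D t * P (c t) (e t) else 0) M,
      Finset.sum_range_succ (fun t => if a = c (t+1) then ε * D t * P (c (t+1)) (e t) else 0) M,
      Finset.sum_sub_distrib]
    ring
  have hΔle : ∀ a, ∑ t ∈ Finset.range (M+1), ((if a = c t then ε * D t * P (c t) (e t) else 0)
        - (if a = c (t+1) then ε * D t * P (c (t+1)) (e t) else 0)) ≤ 0 := by
    intro a
    rw [hΔsplit a]
    have h1 : ∑ t ∈ Finset.range M, ((if a = c (t+1) then ε * D (t+1) * P (c (t+1)) (e (t+1)) else 0)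
        - (if a = c (t+1) then ε * D t * P (c (t+1)) (e t) else 0)) ≤ 0 := by
      apply Finset.sum_nonpos
      intro t ht
      have := hpair a t ht
      linarith
    have h2 := (hwrap2 a).1
    linarith
  have hΔlt : ∑ t ∈ Finset.range (M+1), ((if (c 0 : Fin m) = c t then ε * D t * P (c t) (e t) else 0)
        - (if (c 0 : Fin m) = c (t+1) then ε * D t * P (c (t+1)) (e t) else 0)) < 0 := by
    rw [hΔsplit (c 0)]
    have h1 : ∑ t ∈ Finset.range M, ((if (c 0 : Fin m) = c (t+1) then ε * D (t+1) * P (c (t+1)) (e (t+1)) else 0)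
        - (if (c 0 : Fin m) = c (t+1) then ε * D t * P (c (t+1)) (e t) else 0)) ≤ 0 := by
      apply Finset.sum_nonpos
      intro t ht
      have := hpair (c 0) t ht
      linarith
    have h2 := (hwrap2 (c 0)).2 rfl
    linarith
  -- conclude
  have hloadle : ∀ a, loadX P Z a ≤ MKS P := by
    intro a
    rw [hload a]
    have hXa := stepA hm P hP hpos X hX hopt a
    linarith [hΔle a]
  have hsupZ : (⨆ a, loadX P Z a) = MKS P :=
    le_antisymm (ciSup_le hloadle) (mks_le hm P hP Z hZfeas)
  have hc0 := stepA hm P hP hpos Z hZfeas hsupZ (c 0)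
  rw [hload (c 0)] at hc0
  have hX0 := stepA hm P hP hpos X hX hopt (c 0)
  linarith [hΔlt]

/-- Bellman-Ford iteration for the multiplicative weight `w`. -/
noncomputable def BF (hm : 0 < m) (w : Fin m → Fin m → ℝ) : ℕ → Fin m → ℝ
  | 0 => fun _ => 1
  | (L+1) => fun i =>
      Finset.univ.inf' ⟨⟨0, hm⟩, Finset.mem_univ _⟩ (fun k => BF hm w L k * w k i)

lemma BF_pos (hm : 0 < m) (w : Fin m → Fin m → ℝ) (hw : ∀ k i, 0 < w k i) :
    ∀ L i, 0 < BF hm w L i := by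
  intro L
  induction L with
  | zero => intro i; norm_num [BF]
  | succ L ih =>
    intro i
    rw [BF]
    refine (Finset.lt_inf'_iff _).mpr ?_
    intro k _
    exact mul_pos (ih k) (hw k i)

lemma BF_le (hm : 0 < m) (w : Fin m → Fin m → ℝ) (L : ℕ) (i k : Fin m) :
    BF hm w (L+1) i ≤ BF hm w L k * w k i := by
  rw [BF]
  exact Finset.inf'_le _ (Finset.mem_univ k)

lemma BF_antitone_step (hm : 0 < m) (w : Fin m → Fin m → ℝ) (hw : ∀ k i, 0 < w k i)
    (hww : ∀ i, w i i = 1) : ∀ L i, BF hm w (L+1) i ≤ BF hm w L i := by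
  intro L
  induction L with
  | zero =>
    intro i
    have := BF_le hm w 0 i i
    rw [hww i, mul_one] at this
    simpa [BF] using this
  | succ L ih =>
    intro i
    rw [BF, BF]
    apply Finset.le_inf'
    intro k _
    calc Finset.univ.inf' ⟨⟨0, hm⟩, Finset.mem_univ _⟩ (fun k => BF hm w (L+1) k * w k i)
        ≤ BF hm w (L+1) k * w k i := Finset.inf'_le _ (Finset.mem_univ k)
      _ ≤ BF hm w L k * w k i := by
          have := ih k
          nlinarith [hw k i]

lemma BF_antitone (hm : 0 < m) (w : Fin m → Fin m → ℝ) (hw : ∀ k i, 0 < w k i)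
    (hww : ∀ i, w i i = 1) {L1 L2 : ℕ} (h : L1 ≤ L2) (i : Fin m) :
    BF hm w L2 i ≤ BF hm w L1 i := by
  induction L2 with
  | zero =>
    have : L1 = 0 := Nat.le_zero.mp h
    rw [this]
  | succ L2 ih =>
    rcases Nat.lt_or_ge L1 (L2+1) with h1 | h2
    · exact le_trans (BF_antitone_step hm w hw hww L2 i) (ih (Nat.lt_succ_iff.mp h1))
    · have : L1 = L2 + 1 := le_antisymm h h2
      rw [this]

/-- Any walk of length `L` ending at `i` upper-bounds `BF L i`. -/
lemma BF_le_walk (hm : 0 < m) (w : Fin m → Fin m → ℝ) (hw : ∀ k i, 0 < w k i) :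
    ∀ L (c : ℕ → Fin m),
      BF hm w L (c L) ≤ ∏ t ∈ Finset.range L, w (c t) (c (t+1)) := by
  intro L
  induction L with
  | zero => intro c; simp [BF]
  | succ L ih =>
    intro c
    have h1 : BF hm w (L+1) (c (L+1)) ≤ BF hm w L (c L) * w (c L) (c (L+1)) :=
      BF_le hm w L (c (L+1)) (c L)
    have h2 := ih c
    rw [Finset.prod_range_succ]
    have hwp := hw (c L) (c (L+1))
    nlinarith

/-- `BF L i` is attained by some walk. -/
lemma BF_eq_walk (hm : 0 < m) (w : Fin m → Fin m → ℝ) :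
    ∀ L (i : Fin m), ∃ c : ℕ → Fin m, c L = i ∧
      BF hm w L i = ∏ t ∈ Finset.range L, w (c t) (c (t+1)) := by
  intro L
  induction L with
  | zero => intro i; exact ⟨fun _ => i, rfl, by simp [BF]⟩
  | succ L ih =>
    intro i
    obtain ⟨k, -, hk⟩ := Finset.exists_mem_eq_inf' (⟨⟨0, hm⟩, Finset.mem_univ _⟩ :
      (Finset.univ : Finset (Fin m)).Nonempty) (fun k => BF hm w L k * w k i)
    obtain ⟨c', hc'L, hc'⟩ := ih k
    refine ⟨fun t => if t ≤ L then c' t else i, by simp, ?_⟩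
    simp only [BF]
    rw [hk, Finset.prod_range_succ]
    have he : ∀ t ∈ Finset.range L,
        w ((fun t => if t ≤ L then c' t else i) t) ((fun t => if t ≤ L then c' t else i) (t+1))
        = w (c' t) (c' (t+1)) := by
      intro t ht
      have h1 : t ≤ L := le_of_lt (Finset.mem_range.mp ht)
      have h2 : t + 1 ≤ L := Finset.mem_range.mp ht
      simp [h1, h2]
    rw [Finset.prod_congr rfl he]
    have hL1 : ¬ (L + 1 ≤ L) := by omega
    simp only [le_refl, if_true, hL1, if_false]
    rw [hc'L, hc']


lemma BF_stab (hm : 0 < m) (w : Fin m → Fin m → ℝ) (hw : ∀ k i, 0 < w k i)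
    (hww : ∀ i, w i i = 1)
    (Hw : ∀ L (c : ℕ → Fin m), c L = c 0 → 1 ≤ ∏ t ∈ Finset.range L, w (c t) (c (t+1))) :
    ∀ L i, BF hm w (m-1) i ≤ BF hm w L i := by
  intro L
  induction L using Nat.strong_induction_on with
  | _ L IH =>
    intro i
    rcases Nat.lt_or_ge L m with hL | hL
    · exact BF_antitone hm w hw hww (by omega) i
    · obtain ⟨c, hcL, hcprod⟩ := BF_eq_walk hm w L i
      obtain ⟨s, t, hst, hlt, htm⟩ : ∃ s t, c s = c t ∧ s < t ∧ t ≤ m := by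
        obtain ⟨x, hx, y, hy, hxy, hcxy⟩ :=
          Finset.exists_ne_map_eq_of_card_lt_of_maps_to
            (s := Finset.range (m+1)) (t := (Finset.univ : Finset (Fin m)))
            (by simp) (fun a _ => Finset.mem_univ (c a))
        rcases Nat.lt_or_ge x y with h | h
        · exact ⟨x, y, hcxy, h, by have := Finset.mem_range.mp hy; omega⟩
        · have hyx : y < x := lt_of_le_of_ne h (Ne.symm hxy)
          exact ⟨y, x, hcxy.symm, hyx, by have := Finset.mem_range.mp hx; omega⟩
      set L' := L - (t - s) with hL'
      set c'' : ℕ → Fin m := fun r => if r < s then c r else c (r + (t - s)) with hc''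
      have hC : ∀ r ≤ s, c'' r = c r := by
        intro r hr
        rcases Nat.lt_or_ge r s with h | h
        · simp [hc'', h]
        · have hrs : r = s := by omega
          subst hrs
          simp only [hc'', if_neg (lt_irrefl r)]
          rw [show r + (t - r) = t by omega, ← hst]
      have hCge : ∀ r, s ≤ r → c'' r = c (r + (t - s)) := by
        intro r hr
        simp [hc'', not_lt.mpr hr]
      have hc''end : c'' L' = i := by
        rw [hCge L' (by omega), show L' + (t - s) = L by omega, hcL]
      have hsplitL : ∏ r ∈ Finset.range L, w (c r) (c (r+1))
          = (∏ r ∈ Finset.range s, w (c r) (c (r+1)))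
            * ((∏ q ∈ Finset.range (t - s), w (c (s + q)) (c (s + q + 1)))
              * (∏ q ∈ Finset.range (L - t), w (c (t + q)) (c (t + q + 1)))) := by
        conv_lhs => rw [show L = s + ((t - s) + (L - t)) by omega]
        rw [Finset.prod_range_add, Finset.prod_range_add]
        congr 1
        congr 1
        apply Finset.prod_congr rfl
        intro q _
        rw [show s + (t - s + q) = t + q by omega]
      have hsplitL' : ∏ r ∈ Finset.range L', w (c'' r) (c'' (r+1))
          = (∏ r ∈ Finset.range s, w (c r) (c (r+1)))
            * (∏ q ∈ Finset.range (L - t), w (c (t + q)) (c (t + q + 1))) := by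
        conv_lhs => rw [show L' = s + (L - t) by omega]
        rw [Finset.prod_range_add]
        congr 1
        · apply Finset.prod_congr rfl
          intro r hr
          have h1 := Finset.mem_range.mp hr
          rw [hC r h1.le, hC (r+1) h1]
        · apply Finset.prod_congr rfl
          intro q _
          rw [hCge (s+q) (by omega), hCge (s+q+1) (by omega),
            show s + q + (t - s) = t + q by omega, show s + q + 1 + (t - s) = t + q + 1 by omega]
      have hmid : 1 ≤ ∏ q ∈ Finset.range (t - s), w (c (s + q)) (c (s + q + 1)) := by
        have hclosed : (fun q => c (s + q)) (t - s) = (fun q => c (s + q)) 0 := by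
          show c (s + (t - s)) = c (s + 0)
          rw [show s + (t - s) = t by omega, show s + 0 = s by omega]
          exact hst.symm
        have h2 := Hw (t - s) (fun q => c (s + q)) hclosed
        calc (1:ℝ) ≤ ∏ q ∈ Finset.range (t - s), w (c (s + q)) (c (s + (q + 1))) := h2
          _ = ∏ q ∈ Finset.range (t - s), w (c (s + q)) (c (s + q + 1)) := by
              apply Finset.prod_congr rfl
              intro q _
              rw [show s + (q + 1) = s + q + 1 by omega]
      have hposA : 0 < ∏ r ∈ Finset.range s, w (c r) (c (r+1)) :=
        Finset.prod_pos fun r _ => hw _ _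
      have hposB : 0 < ∏ q ∈ Finset.range (L - t), w (c (t + q)) (c (t + q + 1)) :=
        Finset.prod_pos fun q _ => hw _ _
      have hprodle : ∏ r ∈ Finset.range L', w (c'' r) (c'' (r+1))
          ≤ ∏ r ∈ Finset.range L, w (c r) (c (r+1)) := by
        rw [hsplitL, hsplitL']
        have h1 : (∏ q ∈ Finset.range (L - t), w (c (t + q)) (c (t + q + 1)))
            ≤ (∏ q ∈ Finset.range (t - s), w (c (s + q)) (c (s + q + 1)))
              * (∏ q ∈ Finset.range (L - t), w (c (t + q)) (c (t + q + 1))) := by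
          calc (∏ q ∈ Finset.range (L - t), w (c (t + q)) (c (t + q + 1)))
              = 1 * (∏ q ∈ Finset.range (L - t), w (c (t + q)) (c (t + q + 1))) := (one_mul _).symm
            _ ≤ _ := mul_le_mul_of_nonneg_right hmid hposB.le
        exact mul_le_mul_of_nonneg_left h1 hposA.le
      have hL'lt : L' < L := by omega
      calc BF hm w (m-1) i ≤ BF hm w L' i := IH L' hL'lt i
        _ = BF hm w L' (c'' L') := by rw [hc''end]
        _ ≤ ∏ r ∈ Finset.range L', w (c'' r) (c'' (r+1)) := BF_le_walk hm w hw L' c''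
        _ ≤ ∏ r ∈ Finset.range L, w (c r) (c (r+1)) := hprodle
        _ = BF hm w L i := hcprod.symm


end Stmt16aux

open Stmt16aux in
theorem stmt16 {m n : ℕ} (hm : 0 < m) (P : Fin m → Fin n → ℝ)
    (hP : ∀ i j, 0 < P i j)
    (X : Fin m → Fin n → ℝ) (hX : Feasible X)
    (hopt : (⨆ i, loadX P X i) = MKS P) :
    ∃ u : Fin m → ℝ, (∀ i, 0 < u i) ∧
      ∀ i j, 0 < X i j → ∀ k, P i j / u i ≤ P k j / u k := by
  rcases Nat.eq_zero_or_pos n with hn0 | hn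
  · subst hn0
    exact ⟨fun _ => 1, fun _ => one_pos, fun i j => Fin.elim0 j⟩
  · haveI : Nonempty (Fin m) := ⟨⟨0, hm⟩⟩
    have hpos : 0 < MKS P := mks_pos hm hn P hP X hX hopt
    have hJ : ∀ i : Fin m, (Finset.univ.filter (fun j => 0 < X i j)).Nonempty := by
      intro i
      have hload := stepA hm P hP hpos X hX hopt i
      by_contra hempty
      rw [Finset.not_nonempty_iff_eq_empty] at hempty
      have hle : loadX P X i ≤ 0 := by
        apply Finset.sum_nonpos
        intro j _
        have hnotpos : ¬ 0 < X i j := by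
          intro hc
          have hmem : j ∈ Finset.univ.filter (fun j => 0 < X i j) :=
            Finset.mem_filter.mpr ⟨Finset.mem_univ j, hc⟩
          rw [hempty] at hmem
          exact absurd hmem (Finset.notMem_empty j)
        have h0 : X i j = 0 := le_antisymm (not_lt.mp hnotpos) (hX.1 i j).1
        rw [h0, zero_mul]
      linarith
    set w : Fin m → Fin m → ℝ := fun k i =>
      (Finset.univ.filter (fun j => 0 < X i j)).inf' (hJ i) (fun j => P k j / P i j) with hw
    have hwpos : ∀ k i, 0 < w k i := by
      intro k i
      rw [hw, Finset.lt_inf'_iff]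
      intro j _
      exact div_pos (hP k j) (hP i j)
    have hwle : ∀ k i j, 0 < X i j → w k i ≤ P k j / P i j := by
      intro k i j hj
      exact Finset.inf'_le _ (Finset.mem_filter.mpr ⟨Finset.mem_univ j, hj⟩)
    have hwii : ∀ i, w i i = 1 := by
      intro i
      apply le_antisymm
      · obtain ⟨j, hjmem⟩ := hJ i
        have h1 := Finset.inf'_le (fun j => P i j / P i j) hjmem
        rwa [div_self (hP i j).ne'] at h1
      · apply Finset.le_inf'
        intro j _
        rw [div_self (hP i j).ne']
    have Hw : ∀ L (c : ℕ → Fin m), c L = c 0 →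
        1 ≤ ∏ t ∈ Finset.range L, w (c t) (c (t+1)) := by
      intro L c hc
      have hchoice : ∀ t, ∃ j : Fin n, (t < L →
          (0 < X (c (t+1)) j ∧ w (c t) (c (t+1)) = P (c t) j / P (c (t+1)) j)) := by
        intro t
        by_cases ht : t < L
        · obtain ⟨j, hjm, hjeq⟩ := Finset.exists_mem_eq_inf' (hJ (c (t+1)))
            (fun j => P (c t) j / P (c (t+1)) j)
          exact ⟨j, fun _ => ⟨(Finset.mem_filter.mp hjm).2, hjeq⟩⟩
        · exact ⟨⟨0, hn⟩, fun h => absurd h ht⟩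
      choose e he using hchoice
      have hprod : ∏ t ∈ Finset.range L, w (c t) (c (t+1))
          = ∏ t ∈ Finset.range L, (P (c t) (e t) / P (c (t+1)) (e t)) := by
        apply Finset.prod_congr rfl
        intro t ht
        exact ((he t) (Finset.mem_range.mp ht)).2
      rw [hprod]
      exact stepH hm hn P hP hpos X hX hopt L c e hc (fun t ht => ((he t) ht).1)
    set y : Fin m → ℝ := BF hm w (m-1) with hy
    have hypos : ∀ i, 0 < y i := fun i => BF_pos hm w hwpos (m-1) i
    have hstep : ∀ i k, y i ≤ y k * w k i := by
      intro i k
      have h1 : BF hm w ((m-1)+1) i ≤ BF hm w (m-1) k * w k i := BF_le hm w (m-1) i k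
      have h2 : BF hm w (m-1) i ≤ BF hm w ((m-1)+1) i := BF_stab hm w hwpos hwii Hw ((m-1)+1) i
      exact le_trans h2 h1
    refine ⟨fun i => (y i)⁻¹, fun i => inv_pos.mpr (hypos i), ?_⟩
    intro i j hXij k
    have h1 : y i ≤ y k * (P k j / P i j) :=
      le_trans (hstep i k) (mul_le_mul_of_nonneg_left (hwle k i j hXij) (hypos k).le)
    have h2 : y i * P i j ≤ y k * P k j := by
      have h3 := mul_le_mul_of_nonneg_right h1 (hP i j).le
      calc y i * P i j ≤ y k * (P k j / P i j) * P i j := h3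
        _ = y k * P k j := by
            have hne : P i j ≠ 0 := (hP i j).ne'
            field_simp
    show P i j / (y i)⁻¹ ≤ P k j / (y k)⁻¹
    rw [div_inv_eq_mul (P i j) (y i), div_inv_eq_mul (P k j) (y k)]
    nlinarith [h2]
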